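/- arXiv:2207.08347 — 3 statements merged into one kernel-verified Lean document; each statement's English description precedes it below -/
import Mathlib

section
/- Let d ∈ ℕ and let p be a real number with 1 < p ≤ 2. Then the function r(v) := ‖v‖_p²/(2(p−1)) on ℝ^d is 1-strongly convex with respect to the ℓ_p norm: for all x, y ∈ ℝ^d and all t ∈ [0, 1], r(tx + (1−t)y) ≤ t·r(x) + (1−t)·r(y) − (t(1−t)/2)·‖x − y‖_p². -/
open Set

noncomputable section

open Real Finset Filter

/-- `ℝ^d` with the Euclidean structure. -/
abbrev Euc (d : ℕ) := EuclideanSpace ℝ (Fin d)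

/-- The `ℓ_p` norm on `ℝ^d`. -/
def lpnorm (d : ℕ) (p : ℝ) (v : Euc d) : ℝ :=
  (∑ i, |v i| ^ p) ^ (1 / p)

section Aux

variable {d : ℕ} {p : ℝ}

lemma hasDerivAt_G {p : ℝ} (hp : 1 ≤ p) (t : ℝ) :
    HasDerivAt (fun t : ℝ => (1 + t) ^ p + (1 - t) ^ p - 2 - p * (p - 1) * t ^ 2)
      (p * (1 + t) ^ (p - 1) - p * (1 - t) ^ (p - 1) - 2 * (p * (p - 1)) * t) t := by
  have h1 : HasDerivAt (fun t : ℝ => (1 + t) ^ p) (p * (1 + t) ^ (p - 1)) t := by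
    have := (Real.hasDerivAt_rpow_const (x := 1 + t) (p := p) (Or.inr hp)).comp t
      ((hasDerivAt_id t).const_add 1)
    exact this.congr_deriv (by ring)
  have h2 : HasDerivAt (fun t : ℝ => (1 - t) ^ p) (-(p * (1 - t) ^ (p - 1))) t := by
    have := (Real.hasDerivAt_rpow_const (x := 1 - t) (p := p) (Or.inr hp)).comp t
      ((hasDerivAt_id t).const_sub 1)
    exact this.congr_deriv (by ring)
  have h3 : HasDerivAt (fun t : ℝ => p * (p - 1) * t ^ 2) (p * (p - 1) * (2 * t)) t := by
    simpa using (hasDerivAt_pow 2 t).const_mul (p * (p - 1))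
  have := ((h1.add h2).sub_const 2).sub h3
  exact this.congr_deriv (by ring)

lemma hasDerivAt_G' {p t : ℝ} (hp : 1 ≤ p) (ht0 : 0 < t) (ht1 : t < 1) :
    HasDerivAt (fun t : ℝ => p * (1 + t) ^ (p - 1) - p * (1 - t) ^ (p - 1) - 2 * (p * (p - 1)) * t)
      (p * (p - 1) * ((1 + t) ^ (p - 2) + (1 - t) ^ (p - 2)) - 2 * (p * (p - 1))) t := by
  have h1 : HasDerivAt (fun t : ℝ => (1 + t) ^ (p - 1)) ((p - 1) * (1 + t) ^ (p - 2)) t := by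
    have := (Real.hasDerivAt_rpow_const (x := 1 + t) (p := p - 1)
      (Or.inl (by positivity))).comp t ((hasDerivAt_id t).const_add 1)
    rw [show p - 1 - 1 = p - 2 by ring] at this
    exact this.congr_deriv (by ring)
  have h2 : HasDerivAt (fun t : ℝ => (1 - t) ^ (p - 1)) (-((p - 1) * (1 - t) ^ (p - 2))) t := by
    have := (Real.hasDerivAt_rpow_const (x := 1 - t) (p := p - 1)
      (Or.inl (by intro h; nlinarith))).comp t ((hasDerivAt_id t).const_sub 1)
    rw [show p - 1 - 1 = p - 2 by ring] at this
    exact this.congr_deriv (by ring)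
  have := ((h1.const_mul p).sub (h2.const_mul p)).sub
    ((hasDerivAt_id t).const_mul (2 * (p * (p - 1))))
  exact this.congr_deriv (by ring)

lemma G_nonneg {p : ℝ} (hp1 : 1 < p) (hp2 : p ≤ 2) {t : ℝ} (ht0 : 0 ≤ t) (ht1 : t ≤ 1) :
    2 + p * (p - 1) * t ^ 2 ≤ (1 + t) ^ p + (1 - t) ^ p := by
  set G' : ℝ → ℝ :=
    fun t => p * (1 + t) ^ (p - 1) - p * (1 - t) ^ (p - 1) - 2 * (p * (p - 1)) * t with hG'
  -- G' is nonneg on [0,1]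
  have hG'cont : Continuous G' := by
    have c1 : Continuous fun t : ℝ => (1 + t) ^ (p - 1) :=
      (continuous_const.add continuous_id).rpow_const fun x => Or.inr (by linarith)
    have c2 : Continuous fun t : ℝ => (1 - t) ^ (p - 1) :=
      (continuous_const.sub continuous_id).rpow_const fun x => Or.inr (by linarith)
    exact ((continuous_const.mul c1).sub (continuous_const.mul c2)).sub (continuous_const.mul continuous_id)
  have hG'mono : MonotoneOn G' (Icc 0 1) := by
    apply monotoneOn_of_deriv_nonneg (convex_Icc 0 1) hG'cont.continuousOn
    · intro x hx
      rw [interior_Icc] at hx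
      exact (hasDerivAt_G' hp1.le hx.1 hx.2).differentiableAt.differentiableWithinAt
    · intro x hx
      rw [interior_Icc] at hx
      rw [(hasDerivAt_G' hp1.le hx.1 hx.2).deriv]
      have hA : (0:ℝ) < (1 + x) ^ (p - 2) := rpow_pos_of_pos (by linarith [hx.1]) _
      have hB : (0:ℝ) < (1 - x) ^ (p - 2) := rpow_pos_of_pos (by linarith [hx.2]) _
      have hAB : 1 ≤ (1 + x) ^ (p - 2) * (1 - x) ^ (p - 2) := by
        rw [← Real.mul_rpow (by linarith [hx.1]) (by linarith [hx.2])]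
        exact Real.one_le_rpow_of_pos_of_le_one_of_nonpos
          (by nlinarith [hx.1, hx.2]) (by nlinarith [hx.1, hx.2]) (by linarith)
      have h2 : 2 ≤ (1 + x) ^ (p - 2) + (1 - x) ^ (p - 2) := by
        nlinarith [sq_nonneg ((1 + x) ^ (p - 2) - (1 - x) ^ (p - 2))]
      have hpp : 0 < p * (p - 1) := by nlinarith
      nlinarith
  have hG'0 : G' 0 = 0 := by simp [hG']
  have hG'nonneg : ∀ x ∈ Icc (0:ℝ) 1, 0 ≤ G' x := fun x hx => by
    have := hG'mono (left_mem_Icc.mpr zero_le_one) hx hx.1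
    rwa [hG'0] at this
  -- G is monotone on [0,1]
  set G : ℝ → ℝ := fun t => (1 + t) ^ p + (1 - t) ^ p - 2 - p * (p - 1) * t ^ 2 with hG
  have hGdiff : Differentiable ℝ G := fun x => (hasDerivAt_G hp1.le x).differentiableAt
  have hGmono : MonotoneOn G (Icc 0 1) := by
    apply monotoneOn_of_deriv_nonneg (convex_Icc 0 1) hGdiff.continuous.continuousOn
      hGdiff.differentiableOn
    · intro x hx
      rw [interior_Icc] at hx
      rw [(hasDerivAt_G hp1.le x).deriv]
      exact hG'nonneg x ⟨hx.1.le, hx.2.le⟩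
  have hG0 : G 0 = 0 := by norm_num [hG]
  have := hGmono (left_mem_Icc.mpr zero_le_one) ⟨ht0, ht1⟩ ht0
  rw [hG0] at this
  have h2 : (0:ℝ) ≤ (1 + t) ^ p + (1 - t) ^ p - 2 - p * (p - 1) * t ^ 2 := this
  linarith

lemma twoPointNorm {p : ℝ} (hp1 : 1 < p) (hp2 : p ≤ 2) {t : ℝ} (ht0 : 0 ≤ t) (ht1 : t ≤ 1) :
    2 * (1 + (p - 1) * t ^ 2) ^ (p / 2) ≤ (1 + t) ^ p + (1 - t) ^ p := by
  have hb : (1 + (p - 1) * t ^ 2) ^ (p / 2) ≤ 1 + p / 2 * ((p - 1) * t ^ 2) :=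
    rpow_one_add_le_one_add_mul_self (by nlinarith) (by linarith) (by linarith)
  have := G_nonneg hp1 hp2 ht0 ht1
  nlinarith

lemma twoPoint_nonneg {p : ℝ} (hp1 : 1 < p) (hp2 : p ≤ 2) {a b : ℝ} (hb : 0 ≤ b) (hba : b ≤ a) :
    (a ^ 2 + (p - 1) * b ^ 2) ^ (p / 2) ≤ ((a + b) ^ p + (a - b) ^ p) / 2 := by
  rcases eq_or_lt_of_le (hb.trans hba) with h | ha
  · have hb0 : b = 0 := le_antisymm (hba.trans h.symm.le) hb
    rw [← h, hb0, show (0:ℝ)^2 + (p-1)*(0:ℝ)^2 = 0 by ring, show (0:ℝ)+(0:ℝ) = 0 by ring,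
      show (0:ℝ)-(0:ℝ) = 0 by ring, Real.zero_rpow (by positivity), Real.zero_rpow (by positivity)]
    norm_num
  · have ht0 : 0 ≤ b / a := div_nonneg hb ha.le
    have ht1 : b / a ≤ 1 := (div_le_one ha).mpr hba
    have hane : a ≠ 0 := ha.ne'
    have key := twoPointNorm hp1 hp2 ht0 ht1
    have hap : (0:ℝ) < a ^ (p : ℝ) := Real.rpow_pos_of_pos ha _
    have e1 : (a ^ 2 + (p - 1) * b ^ 2) ^ (p / 2) = a ^ (p:ℝ) * (1 + (p - 1) * (b/a) ^ 2) ^ (p / 2) := by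
      have h0 : a ^ 2 + (p - 1) * b ^ 2 = a ^ 2 * (1 + (p - 1) * (b/a) ^ 2) := by
        field_simp
      rw [h0, Real.mul_rpow (by positivity) (by nlinarith), ← Real.rpow_natCast a 2,
        ← Real.rpow_mul ha.le, show ((2:ℕ):ℝ) * (p/2) = p by push_cast; ring]
    have e2 : (a + b) ^ p = a ^ (p:ℝ) * (1 + b/a) ^ p := by
      rw [← Real.mul_rpow ha.le (by linarith), show a * (1 + b/a) = a + b by field_simp]
    have e3 : (a - b) ^ p = a ^ (p:ℝ) * (1 - b/a) ^ p := by
      have h1t : 0 ≤ 1 - b/a := by linarith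
      rw [← Real.mul_rpow ha.le h1t, show a * (1 - b/a) = a - b by field_simp]
    rw [e1, e2, e3]
    nlinarith

lemma twoPoint_nn {p : ℝ} (hp1 : 1 < p) (hp2 : p ≤ 2) {a b : ℝ} (ha : 0 ≤ a) (hb : 0 ≤ b) :
    (a ^ 2 + (p - 1) * b ^ 2) ^ (p / 2) ≤ ((a + b) ^ p + |a - b| ^ p) / 2 := by
  rcases le_total b a with h | h
  · rw [abs_of_nonneg (by linarith : (0:ℝ) ≤ a - b)]
    exact twoPoint_nonneg hp1 hp2 hb h
  · rw [abs_of_nonpos (by linarith : a - b ≤ 0), neg_sub]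
    have h1 : (a ^ 2 + (p - 1) * b ^ 2) ^ (p / 2) ≤ (b ^ 2 + (p - 1) * a ^ 2) ^ (p / 2) := by
      apply Real.rpow_le_rpow (by nlinarith) ?_ (by linarith)
      nlinarith [mul_nonneg (sub_nonneg.mpr h) (by linarith : (0:ℝ) ≤ b + a)]
    refine h1.trans ?_
    rw [add_comm a b]
    exact twoPoint_nonneg hp1 hp2 ha h

lemma twoPoint {p : ℝ} (hp1 : 1 < p) (hp2 : p ≤ 2) (a b : ℝ) :
    (a ^ 2 + (p - 1) * b ^ 2) ^ (p / 2) ≤ (|a + b| ^ p + |a - b| ^ p) / 2 := by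
  have key := twoPoint_nn hp1 hp2 (abs_nonneg a) (abs_nonneg b)
  rw [sq_abs, sq_abs] at key
  refine key.trans (le_of_eq ?_)
  rcases le_or_gt 0 a with ha | ha <;> rcases le_or_gt 0 b with hb | hb
  · have e1 : |a| + |b| = |a + b| := by
      rw [abs_of_nonneg ha, abs_of_nonneg hb, abs_of_nonneg (by linarith : (0:ℝ) ≤ a + b)]
    have e2 : |(|a| - |b|)| = |a - b| := by rw [abs_of_nonneg ha, abs_of_nonneg hb]
    rw [e1, e2]
  · have e1 : |a| + |b| = |a - b| := by
      rw [abs_of_nonneg ha, abs_of_nonpos hb.le, abs_of_nonneg (by linarith : (0:ℝ) ≤ a - b)]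
      ring
    have e2 : |(|a| - |b|)| = |a + b| := by
      rw [abs_of_nonneg ha, abs_of_nonpos hb.le, show a - -b = a + b by ring]
    rw [e1, e2, add_comm (|a - b| ^ p)]
  · have e1 : |a| + |b| = |a - b| := by
      rw [abs_of_nonpos ha.le, abs_of_nonneg hb, abs_of_nonpos (by linarith : a - b ≤ 0)]
      ring
    have e2 : |(|a| - |b|)| = |a + b| := by
      rw [abs_of_nonpos ha.le, abs_of_nonneg hb, show -a - b = -(a + b) by ring, abs_neg]
    rw [e1, e2, add_comm (|a - b| ^ p)]
  · have e1 : |a| + |b| = |a + b| := by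
      rw [abs_of_nonpos ha.le, abs_of_nonpos hb.le, abs_of_nonpos (by linarith : a + b ≤ 0)]
      ring
    have e2 : |(|a| - |b|)| = |a - b| := by
      rw [abs_of_nonpos ha.le, abs_of_nonpos hb.le, show -a - -b = -(a - b) by ring, abs_neg]
    rw [e1, e2]

lemma superadd {r : ℝ} (hr0 : 0 < r) (hr1 : r ≤ 1) {d : ℕ} (u v : Fin d → ℝ)
    (hu : ∀ i, 0 ≤ u i) (hv : ∀ i, 0 ≤ v i) :
    (∑ i, u i ^ r) ^ (1 / r) + (∑ i, v i ^ r) ^ (1 / r)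
      ≤ (∑ i, (u i + v i) ^ r) ^ (1 / r) := by
  have hSu : (0:ℝ) ≤ ∑ i, u i ^ r := Finset.sum_nonneg fun i _ => rpow_nonneg (hu i) r
  have hSv : (0:ℝ) ≤ ∑ i, v i ^ r := Finset.sum_nonneg fun i _ => rpow_nonneg (hv i) r
  have hrne : r ≠ 0 := hr0.ne'
  obtain ⟨U, hUdef⟩ : ∃ U : ℝ, U = (∑ i, u i ^ r) ^ (1 / r) := ⟨_, rfl⟩
  obtain ⟨V, hVdef⟩ : ∃ V : ℝ, V = (∑ i, v i ^ r) ^ (1 / r) := ⟨_, rfl⟩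
  rw [← hUdef, ← hVdef]
  have hU0 : 0 ≤ U := hUdef ▸ rpow_nonneg hSu _
  have hV0 : 0 ≤ V := hVdef ▸ rpow_nonneg hSv _
  rcases eq_or_lt_of_le hU0 with hU | hU
  · have hsum : (∑ i, u i ^ r) = 0 := by
      by_contra h
      have h1 : 0 < (∑ i, u i ^ r) := lt_of_le_of_ne hSu (Ne.symm h)
      have h2 : 0 < U := hUdef ▸ rpow_pos_of_pos h1 (1/r)
      exact absurd hU.symm h2.ne'
    have hu0 : ∀ i, u i = 0 := fun i => by
      have := (Finset.sum_eq_zero_iff_of_nonneg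
        (fun i _ => rpow_nonneg (hu i) r)).mp hsum i (Finset.mem_univ i)
      exact ((Real.rpow_eq_zero_iff_of_nonneg (hu i)).mp this).1
    rw [← hU, zero_add, hVdef]
    apply Real.rpow_le_rpow hSv _ (by positivity)
    exact Finset.sum_le_sum fun i _ =>
      Real.rpow_le_rpow (hv i) (by linarith [hu0 i, hu i, hv i]) hr0.le
  rcases eq_or_lt_of_le hV0 with hV | hV
  · have hsum : (∑ i, v i ^ r) = 0 := by
      by_contra h
      have h1 : 0 < (∑ i, v i ^ r) := lt_of_le_of_ne hSv (Ne.symm h)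
      have h2 : 0 < V := hVdef ▸ rpow_pos_of_pos h1 (1/r)
      exact absurd hV.symm h2.ne'
    have hv0 : ∀ i, v i = 0 := fun i => by
      have := (Finset.sum_eq_zero_iff_of_nonneg
        (fun i _ => rpow_nonneg (hv i) r)).mp hsum i (Finset.mem_univ i)
      exact ((Real.rpow_eq_zero_iff_of_nonneg (hv i)).mp this).1
    rw [← hV, add_zero, hUdef]
    apply Real.rpow_le_rpow hSu _ (by positivity)
    exact Finset.sum_le_sum fun i _ =>
      Real.rpow_le_rpow (hu i) (by linarith [hv0 i, hv i, hu i]) hr0.le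
  -- main case
  have hUV : 0 < U + V := by linarith
  have hUne : U ≠ 0 := hU.ne'
  have hVne : V ≠ 0 := hV.ne'
  have hUVne : U + V ≠ 0 := hUV.ne'
  have hSuU : (∑ i, u i ^ r) = U ^ r := by
    rw [hUdef, ← Real.rpow_mul hSu, one_div, inv_mul_cancel₀ hrne, Real.rpow_one]
  have hSvV : (∑ i, v i ^ r) = V ^ r := by
    rw [hVdef, ← Real.rpow_mul hSv, one_div, inv_mul_cancel₀ hrne, Real.rpow_one]
  have hconc := Real.concaveOn_rpow (le_of_lt hr0) hr1
  have key : (U + V) ^ r ≤ ∑ i, (u i + v i) ^ r := by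
    have pointwise : ∀ i, U / (U + V) * ((U + V) / U * u i) ^ r
        + V / (U + V) * ((U + V) / V * v i) ^ r ≤ (u i + v i) ^ r := by
      intro i
      have h := hconc.2 (x := (U + V) / U * u i) (y := (U + V) / V * v i)
        (mem_Ici.mpr (mul_nonneg (by positivity) (hu i)))
        (mem_Ici.mpr (mul_nonneg (by positivity) (hv i)))
        (show (0:ℝ) ≤ U / (U + V) by positivity) (show (0:ℝ) ≤ V / (U + V) by positivity)
        (show U / (U + V) + V / (U + V) = 1 by field_simp)
      simp only [smul_eq_mul] at h
      have harg : U / (U + V) * ((U + V) / U * u i) + V / (U + V) * ((U + V) / V * v i)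
          = u i + v i := by
        field_simp
      rw [harg] at h
      exact h
    calc (U + V) ^ r = ∑ i, (U / (U + V) * ((U + V) / U * u i) ^ r
          + V / (U + V) * ((U + V) / V * v i) ^ r) := by
          have e1 : ∀ i : Fin d, ((U + V) / U * u i) ^ r = ((U + V) / U) ^ r * u i ^ r :=
            fun i => Real.mul_rpow (by positivity) (hu i)
          have e2 : ∀ i : Fin d, ((U + V) / V * v i) ^ r = ((U + V) / V) ^ r * v i ^ r :=
            fun i => Real.mul_rpow (by positivity) (hv i)
          rw [Finset.sum_add_distrib]
          simp only [e1, e2]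
          rw [← Finset.mul_sum, ← Finset.mul_sum, ← Finset.mul_sum, ← Finset.mul_sum,
            hSuU, hSvV, Real.div_rpow hUV.le hU0, Real.div_rpow hUV.le hV0]
          have hUr : (0:ℝ) < U ^ r := rpow_pos_of_pos hU r
          have hVr : (0:ℝ) < V ^ r := rpow_pos_of_pos hV r
          field_simp
      _ ≤ ∑ i, (u i + v i) ^ r := Finset.sum_le_sum fun i _ => pointwise i
  calc U + V = ((U + V) ^ r) ^ (1/r) := by
        rw [← Real.rpow_mul hUV.le, mul_one_div, div_self hrne, Real.rpow_one]
    _ ≤ (∑ i, (u i + v i) ^ r) ^ (1/r) :=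
        Real.rpow_le_rpow (rpow_nonneg hUV.le r) key (one_div_nonneg.mpr hr0.le)

lemma lp_sum_nonneg (hp : 0 < p) (z : Euc d) : (0:ℝ) ≤ ∑ i, |z i| ^ p :=
  Finset.sum_nonneg fun i _ => rpow_nonneg (abs_nonneg _) p

lemma lp_sq (hp : 0 < p) (z : Euc d) :
    lpnorm d p z ^ 2 = (∑ i, |z i| ^ p) ^ (2 / p) := by
  rw [lpnorm, ← Real.rpow_natCast (_ ^ (1/p)) 2, ← Real.rpow_mul (lp_sum_nonneg hp z),
    show (1/p) * ((2:ℕ):ℝ) = 2/p by push_cast; ring]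

lemma lp_nonneg (z : Euc d) : 0 ≤ lpnorm d p z := rpow_nonneg (by positivity) _

lemma lp_smul (hp : 0 < p) (c : ℝ) (z : Euc d) :
    lpnorm d p (c • z) = |c| * lpnorm d p z := by
  rw [lpnorm, lpnorm]
  have h1 : ∀ i, |(c • z) i| ^ p = |c| ^ p * |z i| ^ p := by
    intro i
    rw [show (c • z) i = c * z i from rfl, abs_mul,
      Real.mul_rpow (abs_nonneg c) (abs_nonneg _)]
  simp only [h1]
  rw [← Finset.mul_sum, Real.mul_rpow (rpow_nonneg (abs_nonneg c) p) (lp_sum_nonneg hp z),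
    ← Real.rpow_mul (abs_nonneg c), mul_one_div, div_self hp.ne', Real.rpow_one]

lemma lp_midpoint (hp1 : 1 < p) (hp2 : p ≤ 2) (a b : Euc d) :
    lpnorm d p ((2:ℝ)⁻¹ • (a + b)) ^ 2 + (p - 1) * lpnorm d p ((2:ℝ)⁻¹ • (a - b)) ^ 2
      ≤ (lpnorm d p a ^ 2 + lpnorm d p b ^ 2) / 2 := by
  have hp0 : 0 < p := by linarith
  have hr0 : 0 < p / 2 := by linarith
  have hr1 : p / 2 ≤ 1 := by linarith
  set m : Fin d → ℝ := fun i => (a i + b i) / 2 with hm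
  set e : Fin d → ℝ := fun i => (a i - b i) / 2 with he
  have hmi : ∀ i, |((2:ℝ)⁻¹ • (a + b)) i| = |m i| := by
    intro i
    congr 1
    show (2:ℝ)⁻¹ * (a i + b i) = (a i + b i) / 2
    ring
  have hei : ∀ i, |((2:ℝ)⁻¹ • (a - b)) i| = |e i| := by
    intro i
    congr 1
    show (2:ℝ)⁻¹ * (a i - b i) = (a i - b i) / 2
    ring
  -- rewrite squares as (2/p)-powers of sums
  rw [lp_sq hp0, lp_sq hp0, lp_sq hp0, lp_sq hp0]
  simp only [hmi, hei]
  -- abbreviations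
  have habs : ∀ w : ℝ, |w| ^ p = (w ^ 2) ^ (p / 2) := by
    intro w
    rw [← sq_abs w, ← Real.rpow_natCast (|w|) 2, ← Real.rpow_mul (abs_nonneg w),
      show ((2:ℕ):ℝ) * (p/2) = p by push_cast; ring]
  -- step 1: LHS = sums of r-powers
  have step1 : (∑ i, |m i| ^ p) ^ (2/p) + (p - 1) * (∑ i, |e i| ^ p) ^ (2/p)
      ≤ (∑ i, (m i ^ 2 + (p - 1) * e i ^ 2) ^ (p/2)) ^ (2/p) := by
    have e1 : (∑ i, |m i| ^ p) ^ (2/p) = (∑ i, (m i ^ 2) ^ (p/2)) ^ (1/(p/2)) := by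
      rw [show (1:ℝ)/(p/2) = 2/p by field_simp]
      congr 1
      exact Finset.sum_congr rfl fun i _ => habs (m i)
    have e2 : (p - 1) * (∑ i, |e i| ^ p) ^ (2/p)
        = (∑ i, ((p - 1) * e i ^ 2) ^ (p/2)) ^ (1/(p/2)) := by
      have h3 : ∀ i : Fin d, ((p - 1) * e i ^ 2) ^ (p/2)
          = (p - 1) ^ (p/2) * (e i ^ 2) ^ (p/2) :=
        fun i => Real.mul_rpow (by linarith) (by positivity)
      simp only [h3]
      rw [← Finset.mul_sum,
        Real.mul_rpow (rpow_nonneg (by linarith) _)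
          (Finset.sum_nonneg fun i _ => rpow_nonneg (by positivity) _),
        ← Real.rpow_mul (by linarith : (0:ℝ) ≤ p - 1),
        show (p/2) * (1/(p/2)) = 1 by field_simp, Real.rpow_one,
        show (1:ℝ)/(p/2) = 2/p by field_simp]
      congr 2
      exact Finset.sum_congr rfl fun i _ => habs (e i)
    rw [e1, e2, show (2:ℝ)/p = 1/(p/2) by field_simp]
    exact superadd hr0 hr1 (fun i => m i ^ 2) (fun i => (p - 1) * e i ^ 2)
      (fun i => by positivity)
      (fun i => by show (0:ℝ) ≤ (p - 1) * e i ^ 2; nlinarith [sq_nonneg (e i)])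
  refine step1.trans ?_
  -- step 2: pointwise two-point inequality
  have step2 : (∑ i, (m i ^ 2 + (p - 1) * e i ^ 2) ^ (p/2)) ^ (2/p)
      ≤ ((∑ i, |a i| ^ p + ∑ i, |b i| ^ p) / 2) ^ (2/p) := by
    apply Real.rpow_le_rpow
      (Finset.sum_nonneg fun i _ => rpow_nonneg (by nlinarith [sq_nonneg (m i), sq_nonneg (e i)]) _)
      _ (by positivity)
    rw [← Finset.sum_add_distrib, Finset.sum_div]
    apply Finset.sum_le_sum
    intro i _
    have := twoPoint hp1 hp2 (m i) (e i)
    have hma : m i + e i = a i := by rw [hm, he]; ring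
    have hmb : m i - e i = b i := by rw [hm, he]; ring
    rwa [hma, hmb] at this
  refine step2.trans ?_
  -- step 3: convexity of x ^ (2/p)
  have hconv := convexOn_rpow (show (1:ℝ) ≤ 2/p by rw [le_div_iff₀ hp0]; linarith)
  have h := hconv.2 (x := ∑ i, |a i| ^ p) (y := ∑ i, |b i| ^ p)
    (mem_Ici.mpr (lp_sum_nonneg hp0 a)) (mem_Ici.mpr (lp_sum_nonneg hp0 b))
    (show (0:ℝ) ≤ 1/2 by norm_num) (show (0:ℝ) ≤ 1/2 by norm_num) (by norm_num)
  simp only [smul_eq_mul] at h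
  calc ((∑ i, |a i| ^ p + ∑ i, |b i| ^ p) / 2) ^ (2/p)
      = (1/2 * (∑ i, |a i| ^ p) + 1/2 * (∑ i, |b i| ^ p)) ^ (2/p) := by ring_nf
    _ ≤ 1/2 * (∑ i, |a i| ^ p) ^ (2/p) + 1/2 * (∑ i, |b i| ^ p) ^ (2/p) := h
    _ = ((∑ i, |a i| ^ p) ^ (2/p) + (∑ i, |b i| ^ p) ^ (2/p)) / 2 := by ring

lemma midpoint_to_segment {g : ℝ → ℝ} (hc : Continuous g)
    (hm : ∀ s t : ℝ, g ((s + t) / 2) ≤ (g s + g t) / 2) :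
    ∀ t ∈ Icc (0:ℝ) 1, g t ≤ t * g 1 + (1 - t) * g 0 := by
  have key : ∀ n : ℕ, ∀ k : ℕ, k ≤ 2 ^ n →
      g ((k : ℝ) / 2 ^ n) ≤ ((k : ℝ) / 2 ^ n) * g 1 + (1 - (k : ℝ) / 2 ^ n) * g 0 := by
    intro n
    induction n with
    | zero =>
      intro k hk
      interval_cases k
      · norm_num
      · norm_num
    | succ n ih =>
      intro k hk
      have h2n : (2:ℕ) ^ (n + 1) = 2 * 2 ^ n := by ring
      set i := k / 2 with hidef
      set j := k - i with hjdef
      have hij : i + j = k := by omega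
      have hi : i ≤ 2 ^ n := by omega
      have hj : j ≤ 2 ^ n := by omega
      have hsplit : (k : ℝ) / 2 ^ (n + 1) = ((i : ℝ) / 2 ^ n + (j : ℝ) / 2 ^ n) / 2 := by
        field_simp
        push_cast [← hij]
        ring
      rw [hsplit]
      have h1 := hm ((i : ℝ) / 2 ^ n) ((j : ℝ) / 2 ^ n)
      have h2 := ih i hi
      have h3 := ih j hj
      have hk2 : (k : ℝ) / 2 ^ (n + 1) = ((i : ℝ) / 2 ^ n + (j : ℝ) / 2 ^ n) / 2 := hsplit
      calc g (((i : ℝ) / 2 ^ n + (j : ℝ) / 2 ^ n) / 2)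
          ≤ (g ((i : ℝ) / 2 ^ n) + g ((j : ℝ) / 2 ^ n)) / 2 := h1
        _ ≤ ((((i : ℝ) / 2 ^ n) * g 1 + (1 - (i : ℝ) / 2 ^ n) * g 0)
            + (((j : ℝ) / 2 ^ n) * g 1 + (1 - (j : ℝ) / 2 ^ n) * g 0)) / 2 := by linarith
        _ = (((i : ℝ) / 2 ^ n + (j : ℝ) / 2 ^ n) / 2) * g 1
            + (1 - ((i : ℝ) / 2 ^ n + (j : ℝ) / 2 ^ n) / 2) * g 0 := by ring
  intro t ht
  -- approximate t by dyadic rationals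
  set a : ℕ → ℝ := fun n => (⌊t * 2 ^ n⌋₊ : ℝ) / 2 ^ n with ha
  have hbound : ∀ n : ℕ, ⌊t * 2 ^ n⌋₊ ≤ 2 ^ n := by
    intro n
    have : t * 2 ^ n ≤ 2 ^ n := by nlinarith [ht.2, (by positivity : (0:ℝ) < 2 ^ n)]
    calc ⌊t * 2 ^ n⌋₊ ≤ ⌊((2:ℝ) ^ n)⌋₊ := Nat.floor_mono this
      _ = 2 ^ n := by
          rw [show ((2:ℝ) ^ n) = ((2 ^ n : ℕ) : ℝ) by push_cast; ring, Nat.floor_natCast]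
  have hle : ∀ n, a n ≤ t := by
    intro n
    rw [ha]
    have h0 : (0:ℝ) ≤ t * 2 ^ n := mul_nonneg ht.1 (by positivity)
    have := Nat.floor_le h0
    rw [div_le_iff₀ (by positivity : (0:ℝ) < 2 ^ n)]
    linarith
  have hge : ∀ n, t - (1/2) ^ n ≤ a n := by
    intro n
    have hfl := Nat.lt_floor_add_one (t * 2 ^ n)
    have h2pos : (0:ℝ) < 2 ^ n := by positivity
    have heq : a n = (⌊t * 2 ^ n⌋₊ : ℝ) / 2 ^ n := rfl
    rw [heq, le_div_iff₀ h2pos]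
    have h2 : (1/2:ℝ) ^ n * 2 ^ n = 1 := by
      rw [← mul_pow]
      norm_num
    nlinarith [hfl]
  have htend : Tendsto a atTop (nhds t) := by
    have h1 : Tendsto (fun n : ℕ => t - (1/2:ℝ) ^ n) atTop (nhds (t - 0)) :=
      tendsto_const_nhds.sub (tendsto_pow_atTop_nhds_zero_of_lt_one (by norm_num) (by norm_num))
    rw [sub_zero] at h1
    exact tendsto_of_tendsto_of_tendsto_of_le_of_le h1 tendsto_const_nhds hge hle
  have hgt : Tendsto (fun n => g (a n)) atTop (nhds (g t)) :=
    (hc.continuousAt.tendsto).comp htend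
  have hrt : Tendsto (fun n => a n * g 1 + (1 - a n) * g 0) atTop
      (nhds (t * g 1 + (1 - t) * g 0)) := by
    apply Tendsto.add
    · exact htend.mul tendsto_const_nhds
    · exact (tendsto_const_nhds.sub htend).mul tendsto_const_nhds
  apply le_of_tendsto_of_tendsto' hgt hrt
  intro n
  exact key n _ (hbound n)

lemma lp_continuous (hp : 0 < p) : Continuous (lpnorm d p) := by
  unfold lpnorm
  apply Continuous.rpow_const
  · apply continuous_finset_sum
    intro i _
    have h1 : Continuous fun v : Euc d => |v i| := ((continuous_apply i).comp (PiLp.continuous_ofLp 2 _)).abs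
    exact h1.rpow_const fun v => Or.inr hp.le
  · intro v
    exact Or.inr (by positivity)

end Aux

theorem lp_strongly_convex_regularizer {d : ℕ} (p : ℝ) (hp1 : 1 < p) (hp2 : p ≤ 2) :
    ∀ x y : Euc d, ∀ t ∈ Icc (0 : ℝ) 1,
      lpnorm d p (t • x + (1 - t) • y) ^ 2 / (2 * (p - 1)) ≤
        t * (lpnorm d p x ^ 2 / (2 * (p - 1))) + (1 - t) * (lpnorm d p y ^ 2 / (2 * (p - 1))) -
          t * (1 - t) / 2 * lpnorm d p (x - y) ^ 2 := by
  intro x y t ht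
  have hp0 : 0 < p := by linarith
  set K := lpnorm d p (x - y) ^ 2 with hK
  set g : ℝ → ℝ := fun s => lpnorm d p (y + s • (x - y)) ^ 2 - (p - 1) * s ^ 2 * K with hg
  have hgc : Continuous g := by
    have h1 : Continuous fun s : ℝ => y + s • (x - y) :=
      continuous_const.add (continuous_id.smul continuous_const)
    have h2 : Continuous fun s : ℝ => lpnorm d p (y + s • (x - y)) ^ 2 :=
      (((lp_continuous hp0).comp h1).pow 2)
    exact h2.sub ((continuous_const.mul (continuous_pow 2)).mul continuous_const)
  have hgm : ∀ s u : ℝ, g ((s + u) / 2) ≤ (g s + g u) / 2 := by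
    intro s u
    have h := lp_midpoint hp1 hp2 (y + s • (x - y)) (y + u • (x - y))
    have e1 : (2:ℝ)⁻¹ • ((y + s • (x - y)) + (y + u • (x - y)))
        = y + ((s + u) / 2) • (x - y) := by
      module
    have e2 : (2:ℝ)⁻¹ • ((y + s • (x - y)) - (y + u • (x - y)))
        = ((s - u) / 2) • (x - y) := by
      module
    rw [e1, e2, lp_smul hp0] at h
    have e3 : (|(s - u) / 2| * lpnorm d p (x - y)) ^ 2 = ((s - u) / 2) ^ 2 * K := by
      rw [mul_pow, sq_abs, hK]
    rw [e3] at h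
    simp only [hg]
    nlinarith [h]
  have hmain := midpoint_to_segment hgc hgm t ht
  simp only [hg] at hmain
  have e4 : y + (1:ℝ) • (x - y) = x := by module
  have e5 : y + (0:ℝ) • (x - y) = y := by module
  have e6 : y + t • (x - y) = t • x + (1 - t) • y := by module
  rw [e4, e5, e6] at hmain
  have hden : (0:ℝ) < 2 * (p - 1) := by linarith
  have key2 : lpnorm d p (t • x + (1 - t) • y) ^ 2
      ≤ t * lpnorm d p x ^ 2 + (1 - t) * lpnorm d p y ^ 2
        - (2 * (p - 1)) * (t * (1 - t) / 2 * K) := by nlinarith [hmain]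
  calc lpnorm d p (t • x + (1 - t) • y) ^ 2 / (2 * (p - 1))
      ≤ (t * lpnorm d p x ^ 2 + (1 - t) * lpnorm d p y ^ 2
          - (2 * (p - 1)) * (t * (1 - t) / 2 * K)) / (2 * (p - 1)) := by gcongr
    _ = t * (lpnorm d p x ^ 2 / (2 * (p - 1))) + (1 - t) * (lpnorm d p y ^ 2 / (2 * (p - 1)))
          - t * (1 - t) / 2 * K := by
        rw [sub_div, add_div, mul_div_assoc, mul_div_assoc,
          mul_div_cancel_left₀ _ hden.ne']
end
end

section
/- Let δ ∈ (0, 1/2), let ε > 0, and let t ∈ ℝ satisfy |t| ≤ √(2·log(1/(2δ)) + 2ε) − √(2·log(1/(2δ))). Then for every Borel set S ⊆ ℝ, N(t, 1)(S) − e^ε·N(0, 1)(S) ≤ δ, where N(m, 1) denotes the Gaussian measure on ℝ with mean m and variance 1. -/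
open MeasureTheory Set

noncomputable section

open ProbabilityTheory Real

lemma gauss_singleton (m x : ℝ) : gaussianReal m 1 {x} = 0 :=
  gaussianReal_absolutelyContinuous m one_ne_zero (measure_singleton x)

lemma gauss_neg_symm : (gaussianReal 0 1).map (fun x : ℝ => (-1) * x) = gaussianReal 0 1 := by
  rw [gaussianReal_map_const_mul]
  norm_num

lemma gauss_Iio_eq_Ioi (a : ℝ) : gaussianReal 0 1 (Iio (-a)) = gaussianReal 0 1 (Ioi a) := by
  conv_lhs => rw [← gauss_neg_symm]
  rw [Measure.map_apply (by fun_prop) measurableSet_Iio]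
  congr 1
  ext x
  simp

lemma gauss_half : gaussianReal 0 1 (Ioi (0:ℝ)) = 1/2 := by
  have h1 : gaussianReal 0 1 (Iio (0:ℝ)) + gaussianReal 0 1 (Ici (0:ℝ)) = 1 := by
    rw [← measure_union (by simp [disjoint_left]) measurableSet_Ici]
    simp
  have h2 : gaussianReal 0 1 (Ici (0:ℝ)) = gaussianReal 0 1 (Ioi (0:ℝ)) := by
    rw [show Ici (0:ℝ) = {0} ∪ Ioi 0 by ext x; simp [le_iff_lt_or_eq, or_comm],
      measure_union (by simp) measurableSet_Ioi, gauss_singleton, zero_add]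
  have h3 : gaussianReal 0 1 (Iio (0:ℝ)) = gaussianReal 0 1 (Ioi (0:ℝ)) := by
    have := gauss_Iio_eq_Ioi 0
    rwa [neg_zero] at this
  rw [h2, h3, ← two_mul] at h1
  rw [ENNReal.eq_div_iff (by norm_num) (by norm_num)]
  exact h1

lemma pdf_tail_le {a x : ℝ} (ha : 0 ≤ a) (hx : a ≤ x) :
    gaussianPDFReal 0 1 x ≤ exp (-(a^2)/2) * gaussianPDFReal a 1 x := by
  simp only [gaussianPDFReal]
  rw [mul_comm (exp (-(a^2)/2)), mul_assoc (a := (Real.sqrt _)⁻¹), ← Real.exp_add]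
  apply mul_le_mul_of_nonneg_left _ (by positivity)
  apply Real.exp_le_exp.mpr
  push_cast
  nlinarith [sq_nonneg (x-a)]

lemma gauss_tail {a : ℝ} (ha : 0 ≤ a) :
    gaussianReal 0 1 (Ioi a) ≤ ENNReal.ofReal (exp (-(a^2)/2) / 2) := by
  rw [gaussianReal_apply _ one_ne_zero]
  have h1 : ∫⁻ x in Ioi a, gaussianPDF 0 1 x
      ≤ ∫⁻ x in Ioi a, ENNReal.ofReal (exp (-(a^2)/2)) * gaussianPDF a 1 x := by
    apply setLIntegral_mono ((measurable_gaussianPDF a 1).const_mul _)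
    intro x hx
    rw [gaussianPDF, gaussianPDF, ← ENNReal.ofReal_mul (exp_nonneg _)]
    exact ENNReal.ofReal_le_ofReal (pdf_tail_le ha (le_of_lt hx))
  refine h1.trans ?_
  rw [lintegral_const_mul _ (measurable_gaussianPDF a 1),
    ← gaussianReal_apply _ one_ne_zero]
  have h3 : gaussianReal a 1 (Ioi a) = gaussianReal 0 1 (Ioi 0) := by
    have h := gaussianReal_map_add_const (μ := 0) (v := 1) a
    rw [zero_add] at h
    rw [← h, Measure.map_apply (by fun_prop) measurableSet_Ioi]
    congr 1
    ext x
    simp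
  rw [h3, gauss_half, ENNReal.ofReal_div_of_pos (by norm_num)]
  rw [ENNReal.ofReal_ofNat, one_div, ENNReal.div_eq_inv_mul, mul_comm]

lemma pdf_ratio {t e x : ℝ} (h : t*x ≤ e + t^2/2) :
    gaussianPDFReal t 1 x ≤ exp e * gaussianPDFReal 0 1 x := by
  simp only [gaussianPDFReal]
  rw [mul_comm (exp e), mul_assoc (a := (Real.sqrt _)⁻¹), ← Real.exp_add]
  apply mul_le_mul_of_nonneg_left _ (by positivity)
  apply Real.exp_le_exp.mpr
  push_cast
  nlinarith

lemma step1 (t e : ℝ) (S : Set ℝ) (hS : MeasurableSet S) :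
    gaussianReal t 1 S ≤ gaussianReal t 1 {x | e + t^2/2 < t*x}
      + ENNReal.ofReal (exp e) * gaussianReal 0 1 S := by
  set A := {x : ℝ | e + t^2/2 < t*x} with hA
  have hAm : MeasurableSet A := measurableSet_lt measurable_const (measurable_id'.const_mul t)
  have hsub : S ⊆ A ∪ (S \ A) := fun x hx => by
    by_cases h : x ∈ A
    · exact Or.inl h
    · exact Or.inr ⟨hx, h⟩
  refine le_trans (le_trans (measure_mono hsub) (measure_union_le _ _)) ?_
  gcongr
  have key : gaussianReal t 1 (S \ A) ≤ ENNReal.ofReal (exp e) * gaussianReal 0 1 (S \ A) := by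
    rw [gaussianReal_apply _ one_ne_zero, gaussianReal_apply _ one_ne_zero,
      ← lintegral_const_mul _ (measurable_gaussianPDF 0 1)]
    apply setLIntegral_mono ((measurable_gaussianPDF 0 1).const_mul _)
    intro x hx
    rw [gaussianPDF, gaussianPDF, ← ENNReal.ofReal_mul (exp_nonneg _)]
    exact ENNReal.ofReal_le_ofReal (pdf_ratio (not_lt.mp hx.2))
  exact key.trans (mul_le_mul_right (measure_mono diff_subset) _)

lemma gauss_shift_Ioi (t b : ℝ) :
    gaussianReal t 1 (Ioi b) = gaussianReal 0 1 (Ioi (b - t)) := by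
  have h := gaussianReal_map_add_const (μ := 0) (v := 1) t
  rw [zero_add] at h
  rw [← h, Measure.map_apply (by fun_prop) measurableSet_Ioi]
  congr 1
  ext x
  simp [sub_lt_iff_lt_add]

lemma gauss_shift_Iio (t b : ℝ) :
    gaussianReal t 1 (Iio b) = gaussianReal 0 1 (Iio (b - t)) := by
  have h := gaussianReal_map_add_const (μ := 0) (v := 1) t
  rw [zero_add] at h
  rw [← h, Measure.map_apply (by fun_prop) measurableSet_Iio]
  congr 1
  ext x
  simp [lt_sub_iff_add_lt]

lemma step2 (δ e t : ℝ) (hδ : δ ∈ Ioo (0:ℝ) (1/2)) (he : 0 < e)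
    (ht : |t| ≤ Real.sqrt (2 * Real.log (1 / (2 * δ)) + 2 * e) -
      Real.sqrt (2 * Real.log (1 / (2 * δ)))) :
    gaussianReal t 1 {x | e + t^2/2 < t*x} ≤ ENNReal.ofReal δ := by
  obtain ⟨hδ0, hδh⟩ := hδ
  set L := Real.log (1 / (2 * δ)) with hLdef
  have hL : 0 < L := Real.log_pos (by rw [lt_div_iff₀ (by linarith)]; linarith)
  by_cases ht0 : t = 0
  · simp only [ht0]
    have : {x : ℝ | e + (0:ℝ)^2/2 < 0*x} = ∅ := by
      ext x; simp; linarith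
    rw [this]
    simp
  -- t ≠ 0
  set s := |t| with hs
  have hs0 : 0 < s := abs_pos.mpr ht0
  set a := e/s - s/2 with ha
  clear_value s a
  -- arithmetic: √(2L) ≤ a
  have hsq : Real.sqrt (2*L) ^ 2 = 2*L := Real.sq_sqrt (by positivity)
  have hkey : s + Real.sqrt (2*L) ≤ Real.sqrt (2*L + 2*e) := by linarith
  have hsq2 : (s + Real.sqrt (2*L))^2 ≤ 2*L + 2*e := by
    have := pow_le_pow_left₀ (by positivity) hkey 2
    rwa [Real.sq_sqrt (by positivity)] at this
  have hssq : s^2 + 2*s*Real.sqrt (2*L) ≤ 2*e := by nlinarith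
  have haL : Real.sqrt (2*L) ≤ a := by
    rw [ha, show e/s - s/2 = (2*e - s^2)/(2*s) by field_simp,
      le_div_iff₀ (by positivity)]
    nlinarith
  have ha0 : 0 ≤ a := le_trans (Real.sqrt_nonneg _) haL
  -- reduce to tail at a
  have hred : gaussianReal t 1 {x | e + t^2/2 < t*x} = gaussianReal 0 1 (Ioi a) := by
    rcases lt_or_gt_of_ne ht0 with hneg | hpos
    · have hseq : s = -t := hs.trans (abs_of_neg hneg)
      have hset : {x : ℝ | e + t^2/2 < t*x} = Iio ((e + t^2/2)/t) := by
        ext x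
        simp only [mem_setOf_eq, mem_Iio]
        rw [lt_div_iff_of_neg hneg, mul_comm x t]
      rw [hset, gauss_shift_Iio]
      have : (e + t^2/2)/t - t = -a := by
        rw [ha, hseq]; field_simp; ring
      rw [this, gauss_Iio_eq_Ioi]
    · have hseq : s = t := hs.trans (abs_of_pos hpos)
      have hset : {x : ℝ | e + t^2/2 < t*x} = Ioi ((e + t^2/2)/t) := by
        ext x
        simp only [mem_setOf_eq, mem_Ioi]
        rw [div_lt_iff₀ hpos, mul_comm x t]
      rw [hset, gauss_shift_Ioi]
      congr 1
      rw [ha, hseq]; field_simp; ring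
  rw [hred]
  refine (gauss_tail ha0).trans (ENNReal.ofReal_le_ofReal ?_)
  -- exp(-a²/2)/2 ≤ δ
  have ha2 : 2*L ≤ a^2 := by nlinarith [mul_le_mul haL haL (Real.sqrt_nonneg (2*L)) ha0, hsq]
  have : exp (-(a^2)/2) ≤ 2*δ := by
    have h1 : exp (-(a^2)/2) ≤ exp (-L) := by
      apply Real.exp_le_exp.mpr; linarith
    have h2 : exp (-L) = 2*δ := by
      rw [hLdef, one_div, Real.log_inv, neg_neg, Real.exp_log (by linarith)]
    linarith
  linarith

theorem gaussian_privacy_curve (δ ε t : ℝ) (hδ : δ ∈ Ioo (0 : ℝ) (1/2)) (hε : 0 < ε)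
    (ht : |t| ≤ Real.sqrt (2 * Real.log (1 / (2 * δ)) + 2 * ε) -
      Real.sqrt (2 * Real.log (1 / (2 * δ)))) :
    ∀ S : Set ℝ, MeasurableSet S →
      ((ProbabilityTheory.gaussianReal t 1) S).toReal -
        Real.exp ε * ((ProbabilityTheory.gaussianReal 0 1) S).toReal ≤ δ := by
  intro S hS
  have h1 := step1 t ε S hS
  have h2 := step2 δ ε t hδ hε ht
  have hfin1 : gaussianReal t 1 {x | ε + t^2/2 < t*x} ≠ ⊤ := measure_ne_top _ _
  have hfin2 : ENNReal.ofReal (Real.exp ε) * gaussianReal 0 1 S ≠ ⊤ :=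
    ENNReal.mul_ne_top ENNReal.ofReal_ne_top (measure_ne_top _ _)
  have h1r := ENNReal.toReal_mono (by exact ENNReal.add_ne_top.mpr ⟨hfin1, hfin2⟩) h1
  rw [ENNReal.toReal_add hfin1 hfin2, ENNReal.toReal_mul,
    ENNReal.toReal_ofReal (Real.exp_nonneg _)] at h1r
  have h2r := ENNReal.toReal_mono ENNReal.ofReal_ne_top h2
  rw [ENNReal.toReal_ofReal hδ.1.le] at h2r
  linarith
end
end

section
/- Let 𝒳 ⊂ ℝ^d be a nonempty compact convex set with nonempty interior, let F : 𝒳 → ℝ be continuous and convex, and let k > 0. Let ν be the probability measure proportional to exp(−kF) on 𝒳. Then ∫_𝒳 F dν ≤ min_{x∈𝒳} F(x) + d/k. -/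
open MeasureTheory Set Topology Filter
open scoped NNReal ENNReal

noncomputable section

/-- The probability measure proportional to `exp (-F)` on `s`. -/
def gibbs {d : ℕ} (s : Set (Euc d)) (F : Euc d → ℝ) : Measure (Euc d) :=
  (volume.restrict s).withDensity
    (fun x => ENNReal.ofReal (Real.exp (-F x) / ∫ y in s, Real.exp (-F y)))

lemma core_bound {d : ℕ} (𝒳 : Set (Euc d)) (hcomp : IsCompact 𝒳) (hconv : Convex ℝ 𝒳)
    (G : Euc d → ℝ) (hGc : ContinuousOn G 𝒳) (x₀ : Euc d) (hx₀ : x₀ ∈ 𝒳)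
    (hGconv : ∀ y ∈ 𝒳, ∀ t ∈ Icc (0:ℝ) 1, G (t • y + (1-t) • x₀) ≤ t * G y) :
    ∫ x in 𝒳, G x * Real.exp (-G x) ≤ d * ∫ x in 𝒳, Real.exp (-G x) := by
  have hmeas : MeasurableSet 𝒳 := hcomp.isClosed.measurableSet
  set I := ∫ x in 𝒳, G x * Real.exp (-G x) with hI
  set Z := ∫ x in 𝒳, Real.exp (-G x) with hZ
  have hintZ : IntegrableOn (fun x => Real.exp (-G x)) 𝒳 := by
    exact (Real.continuous_exp.comp_continuousOn hGc.neg).integrableOn_compact hcomp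
  have hintI : IntegrableOn (fun x => G x * Real.exp (-G x)) 𝒳 := by
    exact (hGc.mul (Real.continuous_exp.comp_continuousOn hGc.neg)).integrableOn_compact hcomp
  have key : ∀ t ∈ Ioo (0:ℝ) 1, t^d * I ≤ (∑ i ∈ Finset.range d, t^i) * Z := by
    intro t ht
    obtain ⟨ht0, ht1⟩ := ht
    set T : Euc d → Euc d := fun y => t • y + (1-t) • x₀ with hT
    have hTmaps : ∀ y ∈ 𝒳, T y ∈ 𝒳 := fun y hy =>
      hconv hy hx₀ ht0.le (by linarith) (by ring)
    have hTcont : Continuous T := (continuous_id.const_smul t).add continuous_const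
    have hintGT : IntegrableOn (fun x => Real.exp (-G (T x))) 𝒳 := by
      exact (Real.continuous_exp.comp_continuousOn
        ((hGc.comp hTcont.continuousOn hTmaps).neg)).integrableOn_compact hcomp
    have hinttG : IntegrableOn (fun x => Real.exp (-(t * G x))) 𝒳 := by
      exact (Real.continuous_exp.comp_continuousOn
        ((continuousOn_const.mul hGc).neg)).integrableOn_compact hcomp
    -- step 1 : Z + (1-t) * I ≤ ∫ e^{-tG}
    have step1 : Z + (1-t) * I ≤ ∫ x in 𝒳, Real.exp (-(t * G x)) := by
      have : ∫ x in 𝒳, (Real.exp (-G x) + (1-t) * (G x * Real.exp (-G x))) ∂volume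
          ≤ ∫ x in 𝒳, Real.exp (-(t * G x)) ∂volume := by
        apply setIntegral_mono_on (hintZ.add (hintI.const_mul _)) hinttG hmeas
        intro x _
        have h1 : Real.exp (-(t * G x)) = Real.exp (-G x) * Real.exp ((1-t) * G x) := by
          rw [← Real.exp_add]; ring_nf
        have h2 : (1-t) * G x + 1 ≤ Real.exp ((1-t) * G x) := Real.add_one_le_exp _
        calc Real.exp (-G x) + (1-t) * (G x * Real.exp (-G x))
            = Real.exp (-G x) * ((1-t) * G x + 1) := by ring
          _ ≤ Real.exp (-G x) * Real.exp ((1-t) * G x) := by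
              exact mul_le_mul_of_nonneg_left h2 (Real.exp_pos _).le
          _ = Real.exp (-(t * G x)) := h1.symm
      rwa [integral_add hintZ (hintI.const_mul _), integral_const_mul] at this
    -- step 2 : t^d * ∫ e^{-tG} ≤ Z
    have step2 : t^d * ∫ x in 𝒳, Real.exp (-(t * G x)) ≤ Z := by
      have hderiv : ∀ x ∈ 𝒳, HasFDerivWithinAt T
          (t • (ContinuousLinearMap.id ℝ (Euc d))) 𝒳 x := by
        intro x _
        exact (((hasFDerivAt_id x).const_smul t).add_const _).hasFDerivWithinAt
      have hinj : InjOn T 𝒳 := by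
        intro a _ b _ hab
        have : t • a = t • b := by
          have := hab; simpa [hT] using this
        exact smul_right_injective _ ht0.ne' this
      have hdet : |(t • (ContinuousLinearMap.id ℝ (Euc d))).det| = t^d := by
        have : (t • (ContinuousLinearMap.id ℝ (Euc d))).det = t^d := by
          simp [ContinuousLinearMap.det, LinearMap.det_smul, finrank_euclideanSpace_fin]
        rw [this, abs_of_nonneg (pow_nonneg ht0.le _)]
      have hcov : ∫ x in T '' 𝒳, Real.exp (-G x)
          = ∫ x in 𝒳, t^d * Real.exp (-G (T x)) := by
        rw [integral_image_eq_integral_abs_det_fderiv_smul volume hmeas hderiv hinj]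
        simp only [hdet, smul_eq_mul]
      have hsub : ∫ x in T '' 𝒳, Real.exp (-G x) ≤ Z := by
        apply setIntegral_mono_set hintZ
        · exact Filter.Eventually.of_forall (fun x => (Real.exp_pos _).le)
        · exact HasSubset.Subset.eventuallyLE (by
            rintro _ ⟨y, hy, rfl⟩; exact hTmaps y hy)
      have hpt : ∫ x in 𝒳, t^d * Real.exp (-(t * G x))
          ≤ ∫ x in 𝒳, t^d * Real.exp (-G (T x)) := by
        apply setIntegral_mono_on (hinttG.const_mul _) (hintGT.const_mul _) hmeas
        intro x hx
        have := hGconv x hx t ⟨ht0.le, ht1.le⟩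
        have h := Real.exp_le_exp.2 (neg_le_neg this)
        exact mul_le_mul_of_nonneg_left h (pow_nonneg ht0.le _)
      calc t^d * ∫ x in 𝒳, Real.exp (-(t * G x))
          = ∫ x in 𝒳, t^d * Real.exp (-(t * G x)) := (integral_const_mul _ _).symm
        _ ≤ ∫ x in 𝒳, t^d * Real.exp (-G (T x)) := hpt
        _ = ∫ x in T '' 𝒳, Real.exp (-G x) := hcov.symm
        _ ≤ Z := hsub
    -- combine
    have hcomb : t^d * (Z + (1-t) * I) ≤ Z := by
      calc t^d * (Z + (1-t) * I) ≤ t^d * ∫ x in 𝒳, Real.exp (-(t * G x)) := by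
            exact mul_le_mul_of_nonneg_left step1 (pow_nonneg ht0.le _)
        _ ≤ Z := step2
    have hgeom : (1:ℝ) - t^d = (1-t) * (∑ i ∈ Finset.range d, t^i) := by
      have := geom_sum_mul t d
      nlinarith [this]
    have h4 : (1-t) * (t^d * I) ≤ (1-t) * ((∑ i ∈ Finset.range d, t^i) * Z) := by
      calc (1-t) * (t^d * I) = t^d * (Z + (1-t) * I) - t^d * Z := by ring
        _ ≤ Z - t^d * Z := by linarith
        _ = ((1:ℝ) - t^d) * Z := by ring
        _ = ((1-t) * (∑ i ∈ Finset.range d, t^i)) * Z := by rw [hgeom]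
        _ = (1-t) * ((∑ i ∈ Finset.range d, t^i) * Z) := by ring
    exact le_of_mul_le_mul_left h4 (sub_pos.2 ht1)
  -- take the limit t → 1⁻
  have hne1 : (𝓝[<] (1:ℝ)).NeBot := by infer_instance
  have hmem : Ioo (0:ℝ) 1 ∈ 𝓝[<] (1:ℝ) := Ioo_mem_nhdsLT_of_mem ⟨zero_lt_one, le_refl _⟩
  have h1 : Filter.Tendsto (fun t : ℝ => t^d * I) (𝓝[<] (1:ℝ)) (𝓝 I) := by
    have : Filter.Tendsto (fun t : ℝ => t^d * I) (𝓝 (1:ℝ)) (𝓝 ((1:ℝ)^d * I)) := by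
      exact ((continuous_pow d).mul continuous_const).tendsto 1
    simpa using this.mono_left nhdsWithin_le_nhds
  have h2 : Filter.Tendsto (fun t : ℝ => (∑ i ∈ Finset.range d, t^i) * Z)
      (𝓝[<] (1:ℝ)) (𝓝 (d * Z)) := by
    have hc : Continuous (fun t : ℝ => (∑ i ∈ Finset.range d, t^i) * Z) := by
      exact (continuous_finset_sum _ (fun i _ => continuous_pow i)).mul continuous_const
    have : Filter.Tendsto (fun t : ℝ => (∑ i ∈ Finset.range d, t^i) * Z)
        (𝓝 (1:ℝ)) (𝓝 ((∑ i ∈ Finset.range d, (1:ℝ)^i) * Z)) := hc.tendsto 1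
    simpa using this.mono_left nhdsWithin_le_nhds
  exact le_of_tendsto_of_tendsto h1 h2 (Filter.eventually_iff_exists_mem.2
    ⟨Ioo 0 1, hmem, fun t ht => key t ht⟩)

theorem gibbs_risk_bound {d : ℕ} (𝒳 : Set (Euc d)) (hne : 𝒳.Nonempty)
    (hcomp : IsCompact 𝒳) (hconv : Convex ℝ 𝒳) (hint : (interior 𝒳).Nonempty)
    (F : Euc d → ℝ) (hFc : ContinuousOn F 𝒳)
    (hFconv : ∀ x ∈ 𝒳, ∀ y ∈ 𝒳, ∀ t ∈ Icc (0 : ℝ) 1,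
      F (t • x + (1 - t) • y) ≤ t * F x + (1 - t) * F y)
    (k : ℝ) (hk : 0 < k) :
    ∫ x, F x ∂(gibbs 𝒳 (fun x => k * F x)) ≤ sInf (F '' 𝒳) + d / k := by
  have hmeas : MeasurableSet 𝒳 := hcomp.isClosed.measurableSet
  obtain ⟨x₀, hx₀, hmin⟩ := hcomp.exists_isMinOn hne hFc
  set m := F x₀ with hm
  have hsinf : sInf (F '' 𝒳) = m := by
    apply IsLeast.csInf_eq
    exact ⟨⟨x₀, hx₀, rfl⟩, by rintro _ ⟨y, hy, rfl⟩; exact hmin hy⟩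
  set Z := ∫ y in 𝒳, Real.exp (-(k * F y)) with hZ
  have hintZ : IntegrableOn (fun x => Real.exp (-(k * F x))) 𝒳 := by
    exact (Real.continuous_exp.comp_continuousOn
      ((continuousOn_const.mul hFc).neg)).integrableOn_compact hcomp
  have hintJ : IntegrableOn (fun x => F x * Real.exp (-(k * F x))) 𝒳 := by
    exact (hFc.mul (Real.continuous_exp.comp_continuousOn
      ((continuousOn_const.mul hFc).neg))).integrableOn_compact hcomp
  -- Z > 0
  have hvolpos : 0 < volume 𝒳 := by
    obtain ⟨x, hx⟩ := hint
    have : 0 < volume (interior 𝒳) := isOpen_interior.measure_pos volume ⟨x, hx⟩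
    exact lt_of_lt_of_le this (measure_mono interior_subset)
  have hvolne : volume 𝒳 ≠ ⊤ := hcomp.measure_lt_top.ne
  have hZpos : 0 < Z := by
    obtain ⟨xM, hxM, hMax⟩ := hcomp.exists_isMaxOn hne hFc
    have hlow : ∀ x ∈ 𝒳, Real.exp (-(k * F xM)) ≤ Real.exp (-(k * F x)) := by
      intro x hx
      apply Real.exp_le_exp.2
      have := hMax hx
      simp only [neg_le_neg_iff]
      exact mul_le_mul_of_nonneg_left (hMax hx) hk.le
    have : ∫ x in 𝒳, Real.exp (-(k * F xM)) ≤ Z := by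
      apply setIntegral_mono_on (integrableOn_const hvolne) hintZ hmeas hlow
    have hc : ∫ x in 𝒳, Real.exp (-(k * F xM)) ∂volume
        = (volume 𝒳).toReal * Real.exp (-(k * F xM)) := by
      rw [setIntegral_const, smul_eq_mul]
      rfl
    have hpos : 0 < (volume 𝒳).toReal * Real.exp (-(k * F xM)) :=
      mul_pos (ENNReal.toReal_pos hvolpos.ne' hvolne) (Real.exp_pos _)
    linarith [hc ▸ this]
  -- apply the core bound with G = k (F - m)
  have hcore := core_bound 𝒳 hcomp hconv (fun x => k * (F x - m))
    (continuousOn_const.mul (hFc.sub continuousOn_const)) x₀ hx₀ ?_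
  swap
  · intro y hy t ht
    have h1 := hFconv y hy x₀ hx₀ t ht
    have h2 : k * (F (t • y + (1-t) • x₀) - m) ≤ k * ((t * F y + (1-t) * m) - m) := by
      apply mul_le_mul_of_nonneg_left _ hk.le
      linarith
    calc k * (F (t • y + (1-t) • x₀) - m) ≤ k * ((t * F y + (1-t) * m) - m) := h2
      _ = t * (k * (F y - m)) := by ring
  -- rewrite the core bound in terms of Z and J
  set J := ∫ x in 𝒳, F x * Real.exp (-(k * F x)) with hJ
  have hexp : ∀ x : Euc d, Real.exp (-(k * (F x - m)))
      = Real.exp (k * m) * Real.exp (-(k * F x)) := by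
    intro x; rw [← Real.exp_add]; ring_nf
  have hL : ∫ x in 𝒳, (k * (F x - m)) * Real.exp (-(k * (F x - m)))
      = (k * Real.exp (k * m)) * (J - m * (∫ x in 𝒳, Real.exp (-(k * F x)))) := by
    have heq : ∀ x : Euc d, (k * (F x - m)) * Real.exp (-(k * (F x - m)))
        = (k * Real.exp (k*m)) * (F x * Real.exp (-(k * F x)) - m * Real.exp (-(k * F x))) := by
      intro x; rw [hexp x]; ring
    rw [show (fun x => (k * (F x - m)) * Real.exp (-(k * (F x - m))))
        = fun x => (k * Real.exp (k*m)) * (F x * Real.exp (-(k * F x))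
          - m * Real.exp (-(k * F x))) from funext heq]
    rw [integral_const_mul, integral_sub hintJ (hintZ.const_mul m), integral_const_mul]
  have hR : ∫ x in 𝒳, Real.exp (-(k * (F x - m)))
      = Real.exp (k * m) * (∫ x in 𝒳, Real.exp (-(k * F x))) := by
    rw [show (fun x => Real.exp (-(k * (F x - m))))
        = fun x => Real.exp (k*m) * Real.exp (-(k * F x)) from funext hexp]
    rw [integral_const_mul]
  rw [hL, hR] at hcore
  have hZZ : (∫ x in 𝒳, Real.exp (-(k * F x))) = Z := rfl
  rw [hZZ] at hcore
  have hJle : J ≤ (m + d / k) * Z := by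
    have hek : (0:ℝ) < Real.exp (k * m) := Real.exp_pos _
    have h := hcore
    -- (k e^{km}) (J - m Z) ≤ d e^{km} Z
    have h2 : k * (J - m * Z) ≤ d * Z := by
      have h' : (k * (J - m * Z)) * Real.exp (k * m) ≤ (d * Z) * Real.exp (k * m) := by
        nlinarith [h]
      exact le_of_mul_le_mul_right h' hek
    have h3 : J - m * Z ≤ (d / k) * Z := by
      rw [div_mul_eq_mul_div, le_div_iff₀ hk]
      nlinarith [h2]
    linarith
  -- compute the Gibbs integral
  have hgibbs : ∫ x, F x ∂(gibbs 𝒳 (fun x => k * F x)) = J * Z⁻¹ := by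
    unfold gibbs
    have haem : AEMeasurable (fun x => (Real.exp (-(k * F x)) /
        ∫ y in 𝒳, Real.exp (-(k * F y))).toNNReal) (volume.restrict 𝒳) := by
      have hFa : AEMeasurable F (volume.restrict 𝒳) := hFc.aemeasurable hmeas
      have hcont : Continuous (fun y : ℝ => (Real.exp (-(k * y)) /
          ∫ y in 𝒳, Real.exp (-(k * F y))).toNNReal) :=
        continuous_real_toNNReal.comp
          ((Real.continuous_exp.comp (continuous_const.mul continuous_id).neg).div_const _)
      exact hcont.measurable.comp_aemeasurable hFa
    have : (fun x => ENNReal.ofReal (Real.exp (-(k * F x)) /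
        ∫ y in 𝒳, Real.exp (-(k * F y))))
        = fun x => ((Real.exp (-(k * F x)) /
          ∫ y in 𝒳, Real.exp (-(k * F y))).toNNReal : ℝ≥0∞) := rfl
    rw [this, integral_withDensity_eq_integral_smul₀ haem]
    have heq : ∀ x : Euc d, ((Real.exp (-(k * F x)) /
        ∫ y in 𝒳, Real.exp (-(k * F y))).toNNReal : ℝ≥0) • F x
        = (F x * Real.exp (-(k * F x))) * Z⁻¹ := by
      intro x
      have hnn : 0 ≤ Real.exp (-(k * F x)) / ∫ y in 𝒳, Real.exp (-(k * F y)) := by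
        apply div_nonneg (Real.exp_pos _).le hZpos.le
      rw [NNReal.smul_def, smul_eq_mul, Real.coe_toNNReal _ hnn]
      rw [div_eq_mul_inv]
      ring_nf
      rfl
    rw [show (fun x => ((Real.exp (-(k * F x)) /
        ∫ y in 𝒳, Real.exp (-(k * F y))).toNNReal : ℝ≥0) • F x)
        = fun x => (F x * Real.exp (-(k * F x))) * Z⁻¹ from funext heq]
    rw [integral_mul_const _]
  rw [hgibbs, hsinf]
  calc J * Z⁻¹ ≤ ((m + d / k) * Z) * Z⁻¹ := by
        exact mul_le_mul_of_nonneg_right hJle (inv_nonneg.2 hZpos.le)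
    _ = m + d / k := by field_simp
end
end
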